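/- Let M_0, M_1, ..., M_n be a martingale with |M_k - M_{k-1}| ≤ c almost surely and Σ_{k=1}^n Var(M_k - M_{k-1} | F_{k-1}) ≤ V almost surely. Then for all t > 0, Pr[|M_n - M_0| ≥ t] ≤ 2·exp(-t² / (2V + 2ct/3)). -/

import Mathlib

open MeasureTheory ProbabilityTheory Real Finset

private lemma freedman_nonneg_of_deriv {F G : ℝ → ℝ}
    (hd : ∀ x, HasDerivAt F (G x) x) (hG : ∀ x, 0 ≤ x → 0 ≤ G x)
    (hF0 : F 0 = 0) {u : ℝ} (hu : 0 ≤ u) : 0 ≤ F u := by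
  have hmono : MonotoneOn F (Set.Ici (0:ℝ)) := by
    refine monotoneOn_of_deriv_nonneg (convex_Ici 0)
      (fun x _ => (hd x).continuousAt.continuousWithinAt)
      (fun x hx => ((hd x).differentiableAt).differentiableWithinAt) (fun x hx => ?_)
    rw [(hd x).deriv]
    exact hG x (le_of_lt (by simpa using hx))
  calc (0:ℝ) = F 0 := hF0.symm
    _ ≤ F u := hmono Set.self_mem_Ici hu hu

private lemma freedman_exp_le_neg {u : ℝ} (hu : u ≤ 0) : exp u ≤ 1 + u + u ^ 2 / 2 := by
  have hd : ∀ x : ℝ, HasDerivAt (fun x : ℝ => 1 + x + x ^ 2 / 2 - exp x) (1 + x - exp x) x := by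
    intro x
    have : HasDerivAt (fun x : ℝ => 1 + x + x ^ 2 / 2 - exp x) (0 + 1 + 2 * x ^ 1 / 2 - exp x) x :=
      (((hasDerivAt_const x 1).add (hasDerivAt_id x)).add
        ((hasDerivAt_pow 2 x).div_const 2)).sub (Real.hasDerivAt_exp x)
    convert this using 1; ring
  have hanti : AntitoneOn (fun x : ℝ => 1 + x + x ^ 2 / 2 - exp x) (Set.Iic (0:ℝ)) := by
    refine antitoneOn_of_deriv_nonpos (convex_Iic 0)
      (fun x _ => (hd x).continuousAt.continuousWithinAt)
      (fun x hx => ((hd x).differentiableAt).differentiableWithinAt) (fun x hx => ?_)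
    rw [(hd x).deriv]
    have := Real.add_one_le_exp x
    linarith
  have := hanti (Set.mem_Iic.2 hu) (Set.mem_Iic.2 le_rfl) hu
  simp only [Real.exp_zero] at this
  nlinarith [this]

private lemma freedman_exp_le_pos {u : ℝ} (h0 : 0 ≤ u) :
    (3 - u) * exp u ≤ 3 + 2 * u + u ^ 2 / 2 := by
  set F2 : ℝ → ℝ := fun x => 1 - (1 - x) * exp x with hF2
  set F1 : ℝ → ℝ := fun x => 2 + x - (2 - x) * exp x with hF1
  set F0 : ℝ → ℝ := fun x => 3 + 2 * x + x ^ 2 / 2 - (3 - x) * exp x with hF0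
  have hd2 : ∀ x : ℝ, HasDerivAt F2 (x * exp x) x := by
    intro x
    have : HasDerivAt F2 (0 - ((0 - 1) * exp x + (1 - x) * exp x)) x :=
      (hasDerivAt_const x 1).sub
        (((hasDerivAt_const x 1).sub (hasDerivAt_id x)).mul (Real.hasDerivAt_exp x))
    convert this using 1; ring
  have hd1 : ∀ x : ℝ, HasDerivAt F1 (F2 x) x := by
    intro x
    have : HasDerivAt F1 (0 + 1 - ((0 - 1) * exp x + (2 - x) * exp x)) x :=
      ((hasDerivAt_const x 2).add (hasDerivAt_id x)).sub
        (((hasDerivAt_const x 2).sub (hasDerivAt_id x)).mul (Real.hasDerivAt_exp x))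
    convert this using 1; simp only [hF2]; ring
  have hd0 : ∀ x : ℝ, HasDerivAt F0 (F1 x) x := by
    intro x
    have h := (((hasDerivAt_const x 3).add ((hasDerivAt_id x).const_mul 2)).add
        ((hasDerivAt_pow 2 x).div_const 2)).sub
        (((hasDerivAt_const x 3).sub (hasDerivAt_id x)).mul (Real.hasDerivAt_exp x))
    have h' : HasDerivAt F0 (2 * 1 + 2 * x ^ 1 / 2 - ((0 - 1) * exp x + (3 - x) * exp x)) x := by
      exact h.congr_deriv (by simp)
    convert h' using 1; simp only [hF1]; ring
  have h2 : ∀ x : ℝ, 0 ≤ x → 0 ≤ F2 x := fun x hx =>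
    freedman_nonneg_of_deriv hd2 (fun y hy => mul_nonneg hy (exp_pos y).le) (by simp [hF2]) hx
  have h1 : ∀ x : ℝ, 0 ≤ x → 0 ≤ F1 x := fun x hx =>
    freedman_nonneg_of_deriv hd1 h2 (by simp [hF1]) hx
  have h := freedman_nonneg_of_deriv hd0 h1 (by simp [hF0]) h0
  simp only [hF0] at h
  linarith

private lemma freedman_ptwise {l c x : ℝ} (hl : 0 ≤ l) (hc : 0 < c) (hlc : l * c < 3)
    (hx : |x| ≤ c) :
    exp (l * x) ≤ 1 + l * x + l ^ 2 / (2 * (1 - l * c / 3)) * x ^ 2 := by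
  set D : ℝ := 2 * (1 - l * c / 3) with hD_def
  have hD : 0 < D := by simp only [hD_def]; nlinarith
  have hxc : x ≤ c := (abs_le.1 hx).2
  have hu3 : l * x ≤ l * c := mul_le_mul_of_nonneg_left hxc hl
  have hsq : l ^ 2 / D * x ^ 2 = (l * x) ^ 2 / D := by ring
  rw [hsq]
  set u : ℝ := l * x with hu_def
  rcases le_or_gt u 0 with hu | hu
  · have h1 := freedman_exp_le_neg hu
    have h2 : u ^ 2 / 2 ≤ u ^ 2 / D := by
      apply div_le_div_of_nonneg_left (sq_nonneg u) hD
      simp only [hD_def]; nlinarith [mul_nonneg hl hc.le]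
    linarith
  · have hp := freedman_exp_le_pos hu.le
    have h30 : 0 < 3 - u := by linarith
    have hmul : exp u * ((3 - u) * D) ≤ (1 + u + u ^ 2 / D) * ((3 - u) * D) := by
      have expand : (1 + u + u ^ 2 / D) * ((3 - u) * D) =
          (1 + u) * (3 - u) * D + u ^ 2 * (3 - u) := by field_simp
      rw [expand]
      nlinarith [mul_le_mul_of_nonneg_right hp hD.le,
        mul_nonneg (sq_nonneg u) (sub_nonneg.2 hu3), hD, h30]
    have := (mul_le_mul_iff_of_pos_right (mul_pos h30 hD)).1 hmul
    linarith


section OneSided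

variable {Ω : Type*} {m0 : MeasurableSpace Ω} (μ : Measure Ω) [IsProbabilityMeasure μ]
  (ℱ : Filtration ℕ m0) (M : ℕ → Ω → ℝ)

private lemma freedman_one_sided
    (hM : Martingale M ℱ μ)
    (c V : ℝ) (hc : 0 < c) (hV : 0 < V)
    (n : ℕ)
    (hbdd : ∀ k, ∀ᵐ ω ∂μ, |M (k + 1) ω - M k ω| ≤ c)
    (hvar : ∀ᵐ ω ∂μ,
      ∑ k ∈ range n,
        (μ[(fun ω' => (M (k + 1) ω' - M k ω') ^ 2) | ℱ k]) ω ≤ V)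
    (t : ℝ) (ht : 0 < t) :
    (μ {ω | t ≤ M n ω - M 0 ω}).toReal
      ≤ exp (-(t ^ 2) / (2 * V + 2 * c * t / 3)) := by
  -- parameters
  set l : ℝ := t / (V + c * t / 3) with hl_def
  have hden : 0 < V + c * t / 3 := by positivity
  have hl : 0 < l := div_pos ht hden
  have hlc3 : 1 - l * c / 3 = V / (V + c * t / 3) := by
    rw [hl_def]; field_simp; ring
  have h1lc : 0 < 1 - l * c / 3 := by
    rw [hlc3]; positivity
  have hlc : l * c < 3 := by nlinarith [h1lc]
  set ψ : ℝ := l ^ 2 / (2 * (1 - l * c / 3)) with hψ_def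
  have hψ : 0 ≤ ψ := by positivity
  -- increments
  set D : ℕ → Ω → ℝ := fun k ω => M (k + 1) ω - M k ω with hD_def
  set D2 : ℕ → Ω → ℝ := fun k => (fun ω' => (M (k + 1) ω' - M k ω') ^ 2) with hD2_def
  have hM_meas : ∀ k, StronglyMeasurable[m0] (M k) := fun k => (hM.stronglyAdapted k).mono (ℱ.le k)
  have hD_meas : ∀ k, StronglyMeasurable[m0] (D k) := fun k => (hM_meas (k + 1)).sub (hM_meas k)
  have hD_int : ∀ k, Integrable (D k) μ := fun k => (hM.integrable (k + 1)).sub (hM.integrable k)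
  have hD2_int : ∀ k, Integrable (D2 k) μ := by
    intro k
    refine Integrable.mono' (integrable_const (c ^ 2))
      (((hD_meas k).pow 2).aestronglyMeasurable) ?_
    filter_upwards [hbdd k] with ω hω
    have : |D k ω| ≤ c := hω
    calc ‖D2 k ω‖ = |D k ω| ^ 2 := by simp [hD2_def, hD_def, abs_pow, Real.norm_eq_abs, sq_abs]
      _ ≤ c ^ 2 := by nlinarith [abs_nonneg (D k ω)]
  have hexp_int : ∀ k, Integrable (fun ω => exp (l * D k ω)) μ := by
    intro k
    refine Integrable.mono' (integrable_const (exp (l * c)))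
      ((continuous_exp.comp_stronglyMeasurable ((hD_meas k).const_mul l)).aestronglyMeasurable) ?_
    filter_upwards [hbdd k] with ω hω
    rw [Real.norm_eq_abs, abs_of_pos (exp_pos _), exp_le_exp]
    exact mul_le_mul_of_nonneg_left ((abs_le.1 hω).2) hl.le
  -- key conditional expectation bound
  have hkey : ∀ k, μ[(fun ω => exp (l * D k ω)) | ℱ k]
      ≤ᵐ[μ] fun ω => exp (ψ * (μ[D2 k | ℱ k]) ω) := by
    intro k
    have hpt : ∀ᵐ ω ∂μ, exp (l * D k ω) ≤ 1 + l * D k ω + ψ * D2 k ω := by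
      filter_upwards [hbdd k] with ω hω
      have := freedman_ptwise hl.le hc hlc hω
      simpa [hψ_def, hD2_def, hD_def, mul_comm] using this
    have hrhs_int : Integrable (fun ω => 1 + l * D k ω + ψ * D2 k ω) μ :=
      ((integrable_const 1).add ((hD_int k).const_mul l)).add ((hD2_int k).const_mul ψ)
    have h1 : μ[(fun ω => exp (l * D k ω)) | ℱ k]
        ≤ᵐ[μ] μ[(fun ω => 1 + l * D k ω + ψ * D2 k ω) | ℱ k] :=
      condExp_mono (hexp_int k) hrhs_int hpt
    have hsplit : μ[(fun ω => 1 + l * D k ω + ψ * D2 k ω) | ℱ k]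
        =ᵐ[μ] (fun ω => 1 + l * (μ[D k | ℱ k]) ω + ψ * (μ[D2 k | ℱ k]) ω) := by
      have e1 : (fun ω => 1 + l * D k ω + ψ * D2 k ω)
          = (fun ω => (1 : ℝ)) + (l • D k + ψ • D2 k) := by
        funext ω; simp [Pi.add_apply]; ring
      rw [e1]
      have hadd1 := condExp_add (μ := μ) (m := ℱ k) (integrable_const (1 : ℝ))
        (((hD_int k).smul l).add ((hD2_int k).smul ψ))
      have h2 := condExp_add (μ := μ) (m := ℱ k) ((hD_int k).smul l) ((hD2_int k).smul ψ)
      have h3 := condExp_smul (μ := μ) (m := ℱ k) l (D k)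
      have h4 := condExp_smul (μ := μ) (m := ℱ k) ψ (D2 k)
      have h5 : (μ[(fun _ : Ω => (1 : ℝ)) | ℱ k]) = fun _ => (1 : ℝ) :=
        condExp_const (ℱ.le k) (1 : ℝ)
      filter_upwards [hadd1, h2, h3, h4] with ω e0 e2 e3 e4
      have h5' : (μ[(fun _ : Ω => (1 : ℝ)) | ℱ k]) ω = 1 := by rw [h5]
      simp only [Pi.add_apply, Pi.smul_apply, smul_eq_mul] at e0 e2 e3 e4
      rw [e0, e2, e3, e4, h5']; ring
    have hD0 : μ[D k | ℱ k] =ᵐ[μ] 0 := by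
      have := condExp_sub (μ := μ) (m := ℱ k) (hM.integrable (k + 1)) (hM.integrable k)
      have e : D k = M (k + 1) - M k := rfl
      rw [e]
      refine this.trans ?_
      filter_upwards [hM.condExp_ae_eq (Nat.le_succ k), hM.condExp_ae_eq (le_refl k)]
        with ω ha hb
      simp [ha, hb]
    have hfinal : (fun ω => 1 + l * (μ[D k | ℱ k]) ω + ψ * (μ[D2 k | ℱ k]) ω)
        ≤ᵐ[μ] fun ω => exp (ψ * (μ[D2 k | ℱ k]) ω) := by
      filter_upwards [hD0] with ω h0
      simp only [Pi.zero_apply] at h0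
      rw [h0]
      linarith [Real.add_one_le_exp (ψ * (μ[D2 k | ℱ k]) ω)]
    exact h1.trans (hsplit.le.trans hfinal)
  -- variance process and exponential supermartingale
  set A : ℕ → Ω → ℝ := fun k ω => ∑ j ∈ range k, (μ[D2 j | ℱ j]) ω with hA_def
  set g : ℕ → Ω → ℝ := fun k ω => exp (l * (M k ω - M 0 ω) - ψ * A k ω) with hg_def
  have hA_meas : ∀ k, StronglyMeasurable[ℱ k] (A k) := by
    intro k
    apply Finset.stronglyMeasurable_fun_sum
    intro j hj
    exact stronglyMeasurable_condExp.mono (ℱ.mono (le_of_lt (mem_range.1 hj)))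
  have hg_meas : ∀ k, StronglyMeasurable[ℱ k] (g k) := by
    intro k
    apply continuous_exp.comp_stronglyMeasurable
    exact (((hM.stronglyAdapted k).sub ((hM.stronglyAdapted 0).mono (ℱ.mono (Nat.zero_le k)))).const_mul
      l).sub ((hA_meas k).const_mul ψ)
  have hMdiff_bdd : ∀ k : ℕ, ∀ᵐ ω ∂μ, |M k ω - M 0 ω| ≤ k * c := by
    intro k
    induction k with
    | zero => simp
    | succ k ih =>
      filter_upwards [ih, hbdd k] with ω h1 h2
      have e : M (k + 1) ω - M 0 ω = (M (k + 1) ω - M k ω) + (M k ω - M 0 ω) := by ring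
      rw [e]
      calc |(M (k + 1) ω - M k ω) + (M k ω - M 0 ω)|
          ≤ |M (k + 1) ω - M k ω| + |M k ω - M 0 ω| := abs_add_le _ _
        _ ≤ c + k * c := add_le_add h2 h1
        _ = (k + 1 : ℕ) * c := by push_cast; ring
  have hA_nonneg : ∀ k : ℕ, ∀ᵐ ω ∂μ, 0 ≤ A k ω := by
    intro k
    have h : ∀ j : ℕ, ∀ᵐ ω ∂μ, 0 ≤ (μ[D2 j | ℱ j]) ω := by
      intro j
      have := condExp_nonneg (μ := μ) (m := ℱ j) (f := D2 j)
        (by filter_upwards with ω; simp [hD2_def]; positivity)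
      filter_upwards [this] with ω hω
      simpa using hω
    filter_upwards [ae_all_iff.2 h] with ω hω
    exact Finset.sum_nonneg fun j _ => hω j
  have hg_int : ∀ k : ℕ, Integrable (g k) μ := by
    intro k
    refine Integrable.mono' (integrable_const (exp (l * (k * c))))
      (((hg_meas k).mono (ℱ.le k)).aestronglyMeasurable) ?_
    filter_upwards [hMdiff_bdd k, hA_nonneg k] with ω h1 h2
    rw [Real.norm_eq_abs, abs_of_pos (exp_pos _), exp_le_exp]
    have h3 : l * (M k ω - M 0 ω) ≤ l * (k * c) :=
      mul_le_mul_of_nonneg_left ((abs_le.1 h1).2) hl.le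
    nlinarith [mul_nonneg hψ h2]
  have hsuper : ∀ k : ℕ, ∫ ω, g k ω ∂μ ≤ 1 := by
    intro k
    induction k with
    | zero =>
      have e : g 0 = fun _ => 1 := by funext ω; simp [hg_def, hA_def]
      rw [e]; simp
    | succ k ih =>
      set Y : Ω → ℝ := fun ω => exp (l * (M k ω - M 0 ω) - ψ * A (k + 1) ω) with hY_def
      have hAk1_meas : StronglyMeasurable[ℱ k] (A (k + 1)) := by
        apply Finset.stronglyMeasurable_fun_sum
        intro j hj
        exact stronglyMeasurable_condExp.mono (ℱ.mono (Nat.lt_succ_iff.1 (mem_range.1 hj)))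
      have hY_meas : StronglyMeasurable[ℱ k] Y := by
        apply continuous_exp.comp_stronglyMeasurable
        exact (((hM.stronglyAdapted k).sub ((hM.stronglyAdapted 0).mono (ℱ.mono (Nat.zero_le k)))).const_mul
          l).sub (hAk1_meas.const_mul ψ)
      have hgsplit : g (k + 1) = Y * (fun ω => exp (l * D k ω)) := by
        funext ω
        simp only [hg_def, hY_def, Pi.mul_apply, hD_def]
        rw [← exp_add]
        congr 1
        ring
      have hg1_int : Integrable (Y * (fun ω => exp (l * D k ω))) μ := hgsplit ▸ hg_int (k + 1)
      have hcond := condExp_mul_of_stronglyMeasurable_left hY_meas hg1_int (hexp_int k)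
      have hle : μ[g (k + 1) | ℱ k] ≤ᵐ[μ] g k := by
        rw [hgsplit]
        filter_upwards [hcond, hkey k] with ω h1 h2
        rw [h1, Pi.mul_apply]
        have step : Y ω * (μ[(fun ω => exp (l * D k ω)) | ℱ k]) ω
            ≤ Y ω * exp (ψ * (μ[D2 k | ℱ k]) ω) :=
          mul_le_mul_of_nonneg_left h2 (exp_pos _).le
        refine step.trans_eq ?_
        simp only [hY_def, hg_def]
        rw [← exp_add]
        congr 1
        have e2 : A (k + 1) ω = A k ω + (μ[D2 k | ℱ k]) ω := by
          simp [hA_def, Finset.sum_range_succ]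
        rw [e2]; ring
      calc ∫ ω, g (k + 1) ω ∂μ = ∫ ω, (μ[g (k + 1) | ℱ k]) ω ∂μ :=
            (integral_condExp (ℱ.le k)).symm
        _ ≤ ∫ ω, g k ω ∂μ := integral_mono_ae integrable_condExp (hg_int k) hle
        _ ≤ 1 := ih
  -- mgf bound
  have hXint : Integrable (fun ω => exp (l * (M n ω - M 0 ω))) μ := by
    refine Integrable.mono' (integrable_const (exp (l * (n * c))))
      ((continuous_exp.comp_stronglyMeasurable
        (((hM_meas n).sub (hM_meas 0)).const_mul l)).aestronglyMeasurable) ?_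
    filter_upwards [hMdiff_bdd n] with ω h1
    rw [Real.norm_eq_abs, abs_of_pos (exp_pos _), exp_le_exp]
    exact mul_le_mul_of_nonneg_left ((abs_le.1 h1).2) hl.le
  have hmgf : mgf (fun ω => M n ω - M 0 ω) μ l ≤ exp (ψ * V) := by
    have hptw : (fun ω => exp (l * (M n ω - M 0 ω))) ≤ᵐ[μ] fun ω => exp (ψ * V) * g n ω := by
      filter_upwards [hvar] with ω hω
      have hAnV : A n ω ≤ V := hω
      simp only [hg_def]
      rw [← exp_add, exp_le_exp]
      nlinarith [mul_le_mul_of_nonneg_left hAnV hψ]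
    calc mgf (fun ω => M n ω - M 0 ω) μ l = ∫ ω, exp (l * (M n ω - M 0 ω)) ∂μ := rfl
      _ ≤ ∫ ω, exp (ψ * V) * g n ω ∂μ :=
          integral_mono_ae hXint ((hg_int n).const_mul _) hptw
      _ = exp (ψ * V) * ∫ ω, g n ω ∂μ := integral_const_mul _ _
      _ ≤ exp (ψ * V) * 1 := mul_le_mul_of_nonneg_left (hsuper n) (exp_pos _).le
      _ = exp (ψ * V) := mul_one _
  -- Chernoff bound and algebra
  have hmarkov := measure_ge_le_exp_mul_mgf (μ := μ) (X := fun ω => M n ω - M 0 ω) t hl.le hXint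
  refine hmarkov.trans ?_
  have hstep : exp (-l * t) * mgf (fun ω => M n ω - M 0 ω) μ l
      ≤ exp (-l * t) * exp (ψ * V) :=
    mul_le_mul_of_nonneg_left hmgf (exp_pos _).le
  refine hstep.trans ?_
  rw [← exp_add, exp_le_exp]
  have halg : -l * t + ψ * V = -(t ^ 2) / (2 * V + 2 * c * t / 3) := by
    rw [hψ_def, hlc3, hl_def]
    have h2 : (2 : ℝ) * V + 2 * c * t / 3 ≠ 0 := by positivity
    field_simp
    ring
  rw [halg]

end OneSided


/-- Freedman's inequality (martingale Bernstein inequality): if `(M_k)` is a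
martingale with increments bounded by `c` and total conditional variance at most
`V`, then `Pr[|M_n - M_0| ≥ t] ≤ 2 exp(-t² / (2V + 2ct/3))` for all `t > 0`. -/
theorem freedman_inequality
    {Ω : Type*} {m0 : MeasurableSpace Ω} (μ : Measure Ω) [IsProbabilityMeasure μ]
    (ℱ : Filtration ℕ m0) (M : ℕ → Ω → ℝ)
    (hM : Martingale M ℱ μ)
    (c V : ℝ) (hc : 0 < c) (hV : 0 ≤ V)
    (n : ℕ)
    (hbdd : ∀ k, ∀ᵐ ω ∂μ, |M (k + 1) ω - M k ω| ≤ c)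
    (hvar : ∀ᵐ ω ∂μ,
      ∑ k ∈ range n,
        (μ[(fun ω' => (M (k + 1) ω' - M k ω') ^ 2) | ℱ k]) ω ≤ V)
    (t : ℝ) (ht : 0 < t) :
    μ {ω | t ≤ |M n ω - M 0 ω|}
      ≤ ENNReal.ofReal (2 * exp (-(t ^ 2) / (2 * V + 2 * c * t / 3))) := by
  rcases hV.eq_or_lt with hV0 | hVpos
  · -- degenerate case V = 0 : the martingale is a.s. constant
    -- each conditional variance is a.e. zero, so each increment is a.e. zero
    have hD2_int : ∀ k, Integrable (fun ω' => (M (k + 1) ω' - M k ω') ^ 2) μ := by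
      intro k
      have hmeas : StronglyMeasurable[m0] (fun ω' => (M (k + 1) ω' - M k ω') ^ 2) :=
        (((hM.stronglyAdapted (k + 1)).mono (ℱ.le _) : StronglyMeasurable[m0] (M (k + 1))).sub
          ((hM.stronglyAdapted k).mono (ℱ.le _) : StronglyMeasurable[m0] (M k))).pow 2
      refine Integrable.mono' (integrable_const (c ^ 2)) hmeas.aestronglyMeasurable ?_
      filter_upwards [hbdd k] with ω hω
      rw [Real.norm_eq_abs, abs_pow, sq_abs, ← sq_abs]
      nlinarith [abs_nonneg (M (k + 1) ω - M k ω), hω]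
    have hce_nonneg : ∀ k : ℕ, ∀ᵐ ω ∂μ,
        0 ≤ (μ[(fun ω' => (M (k + 1) ω' - M k ω') ^ 2) | ℱ k]) ω := by
      intro k
      have := condExp_nonneg (μ := μ) (m := ℱ k)
        (f := fun ω' => (M (k + 1) ω' - M k ω') ^ 2)
        (by filter_upwards with ω; positivity)
      filter_upwards [this] with ω hω
      simpa using hω
    have hce_zero : ∀ k ∈ range n, μ[(fun ω' => (M (k + 1) ω' - M k ω') ^ 2) | ℱ k] =ᵐ[μ] 0 := by
      intro k hk
      have hall : ∀ᵐ ω ∂μ, ∀ j : ℕ, 0 ≤ (μ[(fun ω' => (M (j + 1) ω' - M j ω') ^ 2) | ℱ j]) ω :=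
        ae_all_iff.2 hce_nonneg
      filter_upwards [hvar, hall] with ω hω hall
      have hle : (μ[(fun ω' => (M (k + 1) ω' - M k ω') ^ 2) | ℱ k]) ω ≤ 0 := by
        rw [← hV0] at hω
        calc (μ[(fun ω' => (M (k + 1) ω' - M k ω') ^ 2) | ℱ k]) ω
            ≤ ∑ j ∈ range n, (μ[(fun ω' => (M (j + 1) ω' - M j ω') ^ 2) | ℱ j]) ω :=
              Finset.single_le_sum (fun j _ => hall j) hk
          _ ≤ 0 := hω
      simpa using le_antisymm hle (hall k)
    have hstep : ∀ k ∈ range n, M (k + 1) =ᵐ[μ] M k := by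
      intro k hk
      have hint0 : ∫ ω, (M (k + 1) ω - M k ω) ^ 2 ∂μ = 0 := by
        rw [← integral_condExp (ℱ.le k) (f := fun ω' => (M (k + 1) ω' - M k ω') ^ 2)]
        rw [integral_congr_ae (hce_zero k hk)]
        simp
      have := (integral_eq_zero_iff_of_nonneg
        (fun ω => sq_nonneg (M (k + 1) ω - M k ω)) (hD2_int k)).1 hint0
      filter_upwards [this] with ω hω
      have : (M (k + 1) ω - M k ω) ^ 2 = 0 := hω
      nlinarith [sq_nonneg (M (k + 1) ω - M k ω)]
    have hMn : M n =ᵐ[μ] M 0 := by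
      have key : ∀ m : ℕ, m ≤ n → M m =ᵐ[μ] M 0 := by
        intro m hm
        induction m with
        | zero => rfl
        | succ k ih =>
          exact (hstep k (mem_range.2 hm)).trans (ih (Nat.le_of_succ_le hm))
      exact key n le_rfl
    have hnull : μ {ω | t ≤ |M n ω - M 0 ω|} = 0 := by
      refine measure_mono_null (fun ω hω => ?_) (ae_iff.1 hMn)
      simp only [Set.mem_setOf_eq] at hω ⊢
      intro heq
      rw [heq] at hω
      simp at hω
      linarith
    rw [hnull]
    exact bot_le
  · -- main case V > 0
    have hMneg : Martingale (-M) ℱ μ := hM.neg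
    have hbdd' : ∀ k, ∀ᵐ ω ∂μ, |(-M) (k + 1) ω - (-M) k ω| ≤ c := by
      intro k
      filter_upwards [hbdd k] with ω hω
      have : (-M) (k + 1) ω - (-M) k ω = -(M (k + 1) ω - M k ω) := by
        simp [Pi.neg_apply]; ring
      rw [this, abs_neg]
      exact hω
    have hvar' : ∀ᵐ ω ∂μ,
        ∑ k ∈ range n, (μ[(fun ω' => ((-M) (k + 1) ω' - (-M) k ω') ^ 2) | ℱ k]) ω ≤ V := by
      have he : ∀ k : ℕ, (fun ω' => ((-M) (k + 1) ω' - (-M) k ω') ^ 2)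
          = (fun ω' => (M (k + 1) ω' - M k ω') ^ 2) := by
        intro k; funext ω'; simp [Pi.neg_apply]; ring
      simp_rw [he]
      exact hvar
    have h1 := freedman_one_sided μ ℱ M hM c V hc hVpos n hbdd hvar t ht
    have h2 := freedman_one_sided μ ℱ (-M) hMneg c V hc hVpos n hbdd' hvar' t ht
    have hsub : {ω | t ≤ |M n ω - M 0 ω|}
        ⊆ {ω | t ≤ M n ω - M 0 ω} ∪ {ω | t ≤ (-M) n ω - (-M) 0 ω} := by
      intro ω hω
      simp only [Set.mem_setOf_eq, Set.mem_union, Pi.neg_apply] at hω ⊢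
      rcases le_abs.1 hω with h | h
      · exact Or.inl h
      · right; linarith
    calc μ {ω | t ≤ |M n ω - M 0 ω|}
        ≤ μ ({ω | t ≤ M n ω - M 0 ω} ∪ {ω | t ≤ (-M) n ω - (-M) 0 ω}) := measure_mono hsub
      _ ≤ μ {ω | t ≤ M n ω - M 0 ω} + μ {ω | t ≤ (-M) n ω - (-M) 0 ω} := measure_union_le _ _
      _ ≤ ENNReal.ofReal (exp (-(t ^ 2) / (2 * V + 2 * c * t / 3)))
          + ENNReal.ofReal (exp (-(t ^ 2) / (2 * V + 2 * c * t / 3))) := by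
          gcongr
          · rw [← ENNReal.ofReal_toReal (measure_ne_top μ _)]
            exact ENNReal.ofReal_le_ofReal h1
          · rw [← ENNReal.ofReal_toReal (measure_ne_top μ _)]
            exact ENNReal.ofReal_le_ofReal h2
      _ = ENNReal.ofReal (2 * exp (-(t ^ 2) / (2 * V + 2 * c * t / 3))) := by
          rw [← ENNReal.ofReal_add (exp_pos _).le (exp_pos _).le]
          ring_nf
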